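/- For real k ≠ 0, the function q(x,t) = 2k/(e^{kx + k³t} + e^{-kx - k³t}) = k sech(kx + k³t) satisfies the nonlocal (reverse space-time) mKdV equation q_{t}(x,t) = q_{xxx}(x,t) + 6 q(x,t) q_x(x,t) q(-x,-t) for all real x, t. -/

import Mathlib

open Real

private lemma lin (a c x : ℝ) : HasDerivAt (fun y : ℝ => a * y + c) a x := by
  simpa using ((hasDerivAt_id x).const_mul a).add_const c

private lemma d1 (K a c x : ℝ) :
    HasDerivAt (fun y => K * (Real.cosh (a * y + c))⁻¹)
      (-(K * a) * Real.sinh (a * x + c) * ((Real.cosh (a * x + c)) ^ 2)⁻¹) x := by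
  have h : HasDerivAt (fun y => K * (Real.cosh (a * y + c))⁻¹) _ x :=
    (((lin a c x).cosh).inv (Real.cosh_pos _).ne').const_mul K
  convert h using 1
  field_simp

private lemma d2 (K a c x : ℝ) :
    HasDerivAt (fun y => K * Real.sinh (a * y + c) * ((Real.cosh (a * y + c)) ^ 2)⁻¹)
      (K * a * ((Real.cosh (a * x + c))⁻¹
        - 2 * (Real.sinh (a * x + c))^2 * ((Real.cosh (a * x + c)) ^ 3)⁻¹)) x := by
  have h1 : HasDerivAt (fun y => K * Real.sinh (a * y + c))
      (K * (Real.cosh (a * x + c) * a)) x := ((lin a c x).sinh).const_mul K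
  have h2 : HasDerivAt (fun y => ((Real.cosh (a * y + c)) ^ 2)⁻¹)
      (-(2 * Real.cosh (a * x + c) * (a * Real.sinh (a * x + c))) /
        ((Real.cosh (a * x + c)) ^ 2) ^ 2) x := by
    have : HasDerivAt (fun y => ((Real.cosh (a * y + c)) ^ 2)⁻¹) _ x :=
      (((lin a c x).cosh).pow 2).inv (pow_ne_zero _ (Real.cosh_pos _).ne')
    simpa [mul_comm, mul_assoc, mul_left_comm] using this
  have h : HasDerivAt (fun y => K * Real.sinh (a * y + c) * ((Real.cosh (a * y + c)) ^ 2)⁻¹) _ x :=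
    h1.mul h2
  convert h using 1
  have hc := (Real.cosh_pos (a * x + c)).ne'
  field_simp
  ring

private lemma d3 (K a c x : ℝ) :
    HasDerivAt (fun y => K * ((Real.cosh (a * y + c))⁻¹
        - 2 * (Real.sinh (a * y + c))^2 * ((Real.cosh (a * y + c)) ^ 3)⁻¹))
      (K * a * (-5 * Real.sinh (a * x + c) * ((Real.cosh (a * x + c))^2)⁻¹
        + 6 * (Real.sinh (a * x + c))^3 * ((Real.cosh (a * x + c))^4)⁻¹)) x := by
  have hc := fun y => (Real.cosh_pos (a * y + c)).ne'
  have h1 : HasDerivAt (fun y => (Real.cosh (a * y + c))⁻¹)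
      (-(Real.sinh (a * x + c) * a) / (Real.cosh (a * x + c)) ^ 2) x :=
    ((lin a c x).cosh).inv (hc x)
  have h2 : HasDerivAt (fun y => (Real.sinh (a * y + c))^2)
      (2 * Real.sinh (a * x + c) * (a * Real.cosh (a * x + c))) x := by
    have : HasDerivAt (fun y => (Real.sinh (a * y + c))^2) _ x := ((lin a c x).sinh).pow 2
    simpa [mul_comm, mul_assoc, mul_left_comm] using this
  have h3 : HasDerivAt (fun y => ((Real.cosh (a * y + c)) ^ 3)⁻¹)
      (-(3 * (Real.cosh (a * x + c))^2 * (a * Real.sinh (a * x + c))) /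
        ((Real.cosh (a * x + c)) ^ 3) ^ 2) x := by
    have : HasDerivAt (fun y => ((Real.cosh (a * y + c)) ^ 3)⁻¹) _ x :=
      (((lin a c x).cosh).pow 3).inv (pow_ne_zero _ (Real.cosh_pos _).ne')
    simpa [mul_comm, mul_assoc, mul_left_comm] using this
  have h : HasDerivAt (fun y => K * ((Real.cosh (a * y + c))⁻¹
        - 2 * (Real.sinh (a * y + c))^2 * ((Real.cosh (a * y + c)) ^ 3)⁻¹)) _ x :=
    (h1.sub ((h2.const_mul 2).mul h3)).const_mul K
  convert h using 1
  field_simp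
  ring

theorem stmt_11 (k : ℝ) (hk : k ≠ 0)
    (q : ℝ → ℝ → ℝ)
    (hq : ∀ x t : ℝ, q x t =
      2 * k / (Real.exp (k * x + k^3 * t) + Real.exp (-(k * x + k^3 * t)))) :
    ∀ x t : ℝ,
      deriv (fun s => q x s) t =
        iteratedDeriv 3 (fun y => q y t) x
          + 6 * q x t * deriv (fun y => q y t) x * q (-x) (-t) := by
  have hq' : ∀ x t : ℝ, q x t = k * (Real.cosh (k * x + k^3 * t))⁻¹ := by
    intro x t
    rw [hq, Real.cosh_eq]
    have : Real.exp (k * x + k ^ 3 * t) + Real.exp (-(k * x + k ^ 3 * t)) > 0 := by positivity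
    field_simp
  intro x t
  set v := k * x + k^3 * t with hv
  have hc := (Real.cosh_pos v).ne'
  -- t-derivative
  have ht : deriv (fun s => q x s) t
      = -(k * k^3) * Real.sinh v * ((Real.cosh v) ^ 2)⁻¹ := by
    have : (fun s => q x s) = fun s => k * (Real.cosh (k^3 * s + k * x))⁻¹ := by
      funext s; rw [hq']; ring_nf
    rw [this]
    have := (d1 k (k^3) (k * x) t).deriv
    rw [this]; try ring_nf
    rw [hv]
  -- x-derivatives
  have hfx : (fun y => q y t) = fun y => k * (Real.cosh (k * y + k^3 * t))⁻¹ := by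
    funext y; rw [hq']
  have hd1 : deriv (fun y => q y t)
      = fun y => -(k * k) * Real.sinh (k * y + k^3 * t) * ((Real.cosh (k * y + k^3 * t)) ^ 2)⁻¹ := by
    funext y; rw [hfx]; exact (d1 k k (k^3*t) y).deriv
  have hd2 : deriv (deriv (fun y => q y t))
      = fun y => (-(k*k)) * k * ((Real.cosh (k * y + k^3*t))⁻¹
        - 2 * (Real.sinh (k * y + k^3*t))^2 * ((Real.cosh (k * y + k^3*t)) ^ 3)⁻¹) := by
    funext y; rw [hd1]; exact (d2 (-(k*k)) k (k^3*t) y).deriv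
  have hd3 : deriv (deriv (deriv (fun y => q y t))) x
      = (-(k*k)) * k * k * (-5 * Real.sinh v * ((Real.cosh v)^2)⁻¹
        + 6 * (Real.sinh v)^3 * ((Real.cosh v)^4)⁻¹) := by
    rw [hd2]
    have := (d3 ((-(k*k))*k) k (k^3*t) x).deriv
    rw [this]; try ring_nf
  have hiter : iteratedDeriv 3 (fun y => q y t) x
      = (-(k*k)) * k * k * (-5 * Real.sinh v * ((Real.cosh v)^2)⁻¹
        + 6 * (Real.sinh v)^3 * ((Real.cosh v)^4)⁻¹) := by
    have e : iteratedDeriv 3 (fun y => q y t) = deriv (deriv (deriv (fun y => q y t))) := by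
      show iteratedDeriv (2+1) (fun y => q y t) = _
      rw [iteratedDeriv_succ]
      show deriv (iteratedDeriv (1+1) (fun y => q y t)) = _
      rw [iteratedDeriv_succ, iteratedDeriv_one]
    rw [e]; exact hd3
  have hqneg : q (-x) (-t) = k * (Real.cosh v)⁻¹ := by
    rw [hq']
    have : k * -x + k^3 * -t = -v := by rw [hv]; ring
    rw [this, Real.cosh_neg]
  rw [ht, hiter, hd1, hq' x t, hqneg]
  simp only [← hv]
  have hs2 : Real.sinh v ^ 2 = Real.cosh v ^ 2 - 1 := by
    have := Real.cosh_sq v; linarith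
  rw [show Real.sinh v ^ 3 = Real.sinh v * Real.sinh v ^ 2 from by ring, hs2]
  field_simp
  ring
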